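/- The function t ↦ f(t)^3 · f'(t)/t is strictly increasing on (0, ∞). -/

import Mathlib

open Set

noncomputable def sAux (f : ℝ → ℝ) (t : ℝ) : ℝ := (1 + 2 * f t ^ 2) ^ (-(1/2) : ℝ)

noncomputable def HAux (f : ℝ → ℝ) (t : ℝ) : ℝ :=
  f t ^ 2 * (3 + 4 * f t ^ 2) / (1 + 2 * f t ^ 2) ^ 2

theorem stmt_10 (f : ℝ → ℝ) (hf0 : f 0 = 0) (hodd : ∀ t : ℝ, f (-t) = -f t)
    (hf1 : ∀ t : ℝ, 0 ≤ t → HasDerivAt f ((1 + 2 * f t ^ 2) ^ (-(1/2) : ℝ)) t) :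
    StrictMonoOn (fun t : ℝ => f t ^ 3 * deriv f t / t) (Set.Ioi 0) := by
  have hApos : ∀ t : ℝ, (0:ℝ) < 1 + 2 * f t ^ 2 := fun t => by positivity
  have hspos : ∀ t : ℝ, 0 < sAux f t := fun t => Real.rpow_pos_of_pos (hApos t) _
  have hf1' : ∀ t : ℝ, 0 ≤ t → HasDerivAt f (sAux f t) t := hf1
  have hs2 : ∀ t : ℝ, sAux f t ^ 2 = (1 + 2 * f t ^ 2)⁻¹ := by
    intro t
    rw [sAux, ← Real.rpow_natCast _ 2, ← Real.rpow_mul (hApos t).le]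
    norm_num
    exact Real.rpow_neg_one _
  have hs3 : ∀ t : ℝ, (1 + 2 * f t ^ 2) ^ ((-(1/2) : ℝ) - 1) = sAux f t ^ 3 := by
    intro t
    rw [sAux, ← Real.rpow_natCast _ 3, ← Real.rpow_mul (hApos t).le]
    norm_num
  -- f is strictly monotone on Ici 0
  have hfmono : StrictMonoOn f (Ici 0) := by
    apply strictMonoOn_of_deriv_pos (convex_Ici 0)
    · exact fun t ht => (hf1' t ht).continuousAt.continuousWithinAt
    · intro t ht
      rw [interior_Ici] at ht
      rw [(hf1' t (le_of_lt ht)).deriv]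
      exact hspos t
  have hfpos : ∀ t : ℝ, 0 < t → 0 < f t := by
    intro t ht
    have := hfmono (le_refl (0:ℝ)) (le_of_lt ht) ht
    rwa [hf0] at this
  -- derivative of h = f^3 * sAux f
  have hh : ∀ t : ℝ, 0 ≤ t → HasDerivAt (fun x => f x ^ 3 * sAux f x) (HAux f t) t := by
    intro t ht
    have h1 : HasDerivAt (fun x => 1 + 2 * f x ^ 2)
        (2 * (2 * f t ^ 1 * sAux f t)) t :=
      (((hf1' t ht).pow 2).const_mul 2).const_add 1
    have h2 : HasDerivAt (fun x => (1 + 2 * f x ^ 2) ^ (-(1/2) : ℝ))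
        ((2 * (2 * f t ^ 1 * sAux f t)) * (-(1/2) : ℝ) *
          (1 + 2 * f t ^ 2) ^ ((-(1/2) : ℝ) - 1)) t :=
      h1.rpow_const (Or.inl (ne_of_gt (hApos t)))
    have h3 : HasDerivAt (fun x => f x ^ 3) (3 * f t ^ 2 * sAux f t) t := by
      have := (hf1' t ht).pow 3
      norm_num at this
      exact this
    have h4 := h3.mul h2
    refine h4.congr_deriv ?_
    symm
    rw [hs3 t,
      show ((1 + 2 * f t ^ 2 : ℝ) ^ (-(1/2) : ℝ)) = sAux f t from rfl, HAux]
    have h2' := hs2 t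
    have hAne : (1 + 2 * f t ^ 2) ≠ 0 := ne_of_gt (hApos t)
    have heq : 3 * f t ^ 2 * sAux f t * sAux f t +
        f t ^ 3 * (2 * (2 * f t ^ 1 * sAux f t) * (-(1/2) : ℝ) * sAux f t ^ 3)
        = 3 * f t ^ 2 * (sAux f t ^ 2) - 2 * f t ^ 4 * (sAux f t ^ 2) ^ 2 := by
      ring
    rw [heq, h2']
    field_simp
    ring
  -- H is strictly monotone
  have hHmono : ∀ a b : ℝ, 0 ≤ a → a < b → HAux f a < HAux f b := by
    intro a b ha hab
    have hfa : 0 ≤ f a := by rw [← hf0]; exact hfmono.monotoneOn (Set.mem_Ici.2 le_rfl) (Set.mem_Ici.2 ha) ha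
    have hfab : f a < f b := hfmono ha (ha.trans hab.le) hab
    have huv : f a ^ 2 < f b ^ 2 := by
      apply pow_lt_pow_left₀ hfab hfa
      norm_num
    have hu0 : (0:ℝ) ≤ f a ^ 2 := sq_nonneg _
    have hv0 : (0:ℝ) ≤ f b ^ 2 := sq_nonneg _
    rw [HAux, HAux, div_lt_div_iff₀ (by positivity) (by positivity)]
    have hpos : (0:ℝ) < 3 + 4 * (f a ^ 2 + f b ^ 2) + 4 * (f a ^ 2) * (f b ^ 2) := by
      positivity
    nlinarith [mul_pos (sub_pos.2 huv) hpos]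
  -- key: for t > 0, HAux f t * t - f t ^3 * sAux f t > 0
  have hkey : ∀ t : ℝ, 0 < t → 0 < HAux f t * t - f t ^ 3 * sAux f t := by
    intro t ht
    obtain ⟨c, hc, hceq⟩ := exists_hasDerivAt_eq_slope (fun x => f x ^ 3 * sAux f x)
      (HAux f) ht
      (fun x hx => ((hh x hx.1).continuousAt.continuousWithinAt))
      (fun x hx => hh x hx.1.le)
    have hc0 : f 0 ^ 3 * sAux f 0 = 0 := by rw [hf0]; ring
    rw [hc0, sub_zero, sub_zero] at hceq
    have : f t ^ 3 * sAux f t = HAux f c * t := by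
      rw [hceq]; field_simp
    rw [this]
    have := hHmono c t hc.1.le hc.2
    nlinarith
  -- the function q = h / t is strictly mono on Ioi 0
  have hq : StrictMonoOn (fun t : ℝ => f t ^ 3 * sAux f t / t) (Ioi 0) := by
    apply strictMonoOn_of_deriv_pos (convex_Ioi 0)
    · intro t ht
      exact (((hh t (le_of_lt ht)).div (hasDerivAt_id' (x := t)) (ne_of_gt ht)).continuousAt).continuousWithinAt
    · intro t ht
      rw [interior_Ioi] at ht
      have hd := (hh t (le_of_lt ht)).div (hasDerivAt_id' (x := t)) (ne_of_gt ht)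
      rw [HasDerivAt.deriv (f := fun t => f t ^ 3 * sAux f t / t) hd]
      exact div_pos (by nlinarith [hkey t ht]) (pow_pos ht 2)
  -- transfer
  intro a ha b hb hab
  have ea : f a ^ 3 * deriv f a / a = f a ^ 3 * sAux f a / a := by
    rw [(hf1' a (le_of_lt ha)).deriv]
  have eb : f b ^ 3 * deriv f b / b = f b ^ 3 * sAux f b / b := by
    rw [(hf1' b (le_of_lt hb)).deriv]
  simp only [ea, eb]
  exact hq ha hb hab
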